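/- Let w ∈ ℝ^m be a probability vector with positive entries, and let [a_j, b_j] ⊆ (0, 1] be intervals with ∑_j a_j ≤ 1 ≤ ∑_j b_j. Consider minimizing f(v) = ∑_j w_j log(w_j/v_j) over probability vectors v with a_j ≤ v_j ≤ b_j. Then the minimizer v* exists, is unique, and is given by v*_j = min(max(w_j/τ*, a_j), b_j), where τ* > 0 is any solution of ∑_j min(max(w_j/τ, a_j), b_j) = 1. -/

import Mathlib

open Finset


/-- existence, uniqueness, and scaling-and-clipping closed form
    for the minimizer of f(v) = ∑ⱼ wⱼ log(wⱼ/vⱼ) over probability vectors v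
    in the box ∏ⱼ [aⱼ, bⱼ] ⊆ (0,1]^m. -/
theorem kl_box_projection_closed_form
    (m : ℕ) (w a b : Fin m → ℝ)
    (hw0 : ∀ j, 0 < w j) (hw1 : ∑ j, w j = 1)
    (ha0 : ∀ j, 0 < a j) (hab : ∀ j, a j ≤ b j) (hb1 : ∀ j, b j ≤ 1)
    (hA : ∑ j, a j ≤ 1) (hB : 1 ≤ ∑ j, b j) :
    ∃ vstar : Fin m → ℝ,
      -- v* is feasible
      ((∀ j, a j ≤ vstar j ∧ vstar j ≤ b j) ∧ ∑ j, vstar j = 1) ∧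
      -- v* minimizes f over the feasible set
      (∀ v : Fin m → ℝ, (∀ j, a j ≤ v j ∧ v j ≤ b j) → ∑ j, v j = 1 →
        ∑ j, w j * Real.log (w j / vstar j) ≤
          ∑ j, w j * Real.log (w j / v j)) ∧
      -- v* is the unique minimizer
      (∀ v : Fin m → ℝ, (∀ j, a j ≤ v j ∧ v j ≤ b j) → ∑ j, v j = 1 →
        (∀ v' : Fin m → ℝ, (∀ j, a j ≤ v' j ∧ v' j ≤ b j) → ∑ j, v' j = 1 →
          ∑ j, w j * Real.log (w j / v j) ≤
            ∑ j, w j * Real.log (w j / v' j)) →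
        v = vstar) ∧
      -- v* is given by scaling and clipping, for any root τ* of the clipped-sum equation
      (∀ τ : ℝ, 0 < τ → ∑ j, min (max (w j / τ) (a j)) (b j) = 1 →
        ∀ j, vstar j = min (max (w j / τ) (a j)) (b j)) := by
  rcases Nat.eq_zero_or_pos m with hm | hm
  · exfalso; subst hm; simpa using hw1
  haveI : Nonempty (Fin m) := ⟨⟨0, hm⟩⟩
  have hb0 : ∀ j, 0 < b j := fun j => lt_of_lt_of_le (ha0 j) (hab j)
  set clip : ℝ → Fin m → ℝ := fun τ j => min (max (w j / τ) (a j)) (b j) with hclip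
  have hclip_lb : ∀ τ j, a j ≤ clip τ j := fun τ j => le_min (le_max_right _ _) (hab j)
  have hclip_ub : ∀ τ j, clip τ j ≤ b j := fun τ j => min_le_right _ _
  have hclip_pos : ∀ τ j, 0 < clip τ j := fun τ j => lt_of_lt_of_le (ha0 j) (hclip_lb τ j)
  -- monotonicity of clip in τ
  have hclip_mono : ∀ τ τ' : ℝ, 0 < τ → τ ≤ τ' → ∀ j, clip τ' j ≤ clip τ j := by
    intro τ τ' hτ h j
    have hww : w j / τ' ≤ w j / τ := by gcongr; exact (hw0 j).le
    exact min_le_min (max_le_max hww le_rfl) le_rfl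
  -- any two roots of the clipped-sum equation give the same clipped vector
  have hclip_eq : ∀ τ τ' : ℝ, 0 < τ → 0 < τ' →
      (∑ j, clip τ j) = 1 → (∑ j, clip τ' j) = 1 → ∀ j, clip τ j = clip τ' j := by
    intro τ τ' hτ hτ' h1 h2
    rcases le_total τ τ' with h | h
    · intro j
      have hle : ∀ i ∈ univ, clip τ' i ≤ clip τ i := fun i _ => hclip_mono τ τ' hτ h i
      exact ((Finset.sum_eq_sum_iff_of_le hle).1 (h2.trans h1.symm) j (mem_univ j)).symm
    · intro j
      have hle : ∀ i ∈ univ, clip τ i ≤ clip τ' i := fun i _ => hclip_mono τ' τ hτ' h i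
      exact (Finset.sum_eq_sum_iff_of_le hle).1 (h1.trans h2.symm) j (mem_univ j)
  -- existence of a root via IVT
  set τ₀ : ℝ := univ.inf' univ_nonempty (fun j => w j / b j) with hτ₀def
  set τ₁ : ℝ := univ.sup' univ_nonempty (fun j => w j / a j) with hτ₁def
  have hτ₀pos : 0 < τ₀ := (Finset.lt_inf'_iff _).2 fun j _ => div_pos (hw0 j) (hb0 j)
  have hτ₁pos : 0 < τ₁ := by
    have j0 : Fin m := ⟨0, hm⟩
    rw [hτ₁def]
    calc (0:ℝ) < w j0 / a j0 := div_pos (hw0 j0) (ha0 j0)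
      _ ≤ _ := Finset.le_sup' (fun i => w i / a i) (mem_univ j0)
  have hgτ₀ : ∀ j, clip τ₀ j = b j := by
    intro j
    have h1 : τ₀ ≤ w j / b j := Finset.inf'_le _ (mem_univ j)
    have h1' : τ₀ * b j ≤ w j := (le_div_iff₀ (hb0 j)).1 h1
    have h2 : b j ≤ w j / τ₀ := by
      rw [le_div_iff₀ hτ₀pos]
      linarith [mul_comm (b j) τ₀]
    exact min_eq_right (le_trans h2 (le_max_left _ _))
  have hgτ₁ : ∀ j, clip τ₁ j = a j := by
    intro j
    have h1 : w j / a j ≤ τ₁ := by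
      rw [hτ₁def]; exact Finset.le_sup' (fun i => w i / a i) (mem_univ j)
    have h1' : w j ≤ τ₁ * a j := by
      have := (div_le_iff₀ (ha0 j)).1 h1
      linarith [mul_comm (a j) τ₁]
    have h2 : w j / τ₁ ≤ a j := by
      rw [div_le_iff₀ hτ₁pos]
      linarith [mul_comm (a j) τ₁]
    show min (max (w j / τ₁) (a j)) (b j) = a j
    rw [max_eq_right h2, min_eq_left (hab j)]
  have hcont : ContinuousOn (fun τ => ∑ j, clip τ j) (Set.uIcc τ₀ τ₁) := by
    apply continuousOn_finset_sum
    intro j _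
    have hne : ∀ x ∈ Set.uIcc τ₀ τ₁, x ≠ 0 := by
      intro x hx
      rcases Set.mem_uIcc.1 hx with ⟨h1, _⟩ | ⟨h1, _⟩
      · exact (lt_of_lt_of_le hτ₀pos h1).ne'
      · exact (lt_of_lt_of_le hτ₁pos h1).ne'
    have hdiv : ContinuousOn (fun τ => w j / τ) (Set.uIcc τ₀ τ₁) :=
      ContinuousOn.div continuousOn_const continuousOn_id hne
    exact ((continuous_id.max continuous_const).min continuous_const).comp_continuousOn hdiv
  have hmem : (1 : ℝ) ∈
      Set.uIcc ((fun τ => ∑ j, clip τ j) τ₀) ((fun τ => ∑ j, clip τ j) τ₁) := by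
    have e0 : (∑ j, clip τ₀ j) = ∑ j, b j := Finset.sum_congr rfl fun j _ => hgτ₀ j
    have e1 : (∑ j, clip τ₁ j) = ∑ j, a j := Finset.sum_congr rfl fun j _ => hgτ₁ j
    simp only [e0, e1]
    exact Set.mem_uIcc.2 (Or.inr ⟨hA, hB⟩)
  obtain ⟨τs, hτsmem, hτseq⟩ := intermediate_value_uIcc hcont hmem
  have hτseq' : (∑ j, clip τs j) = 1 := hτseq
  have hτspos : 0 < τs := by
    rcases Set.mem_uIcc.1 hτsmem with ⟨h1, _⟩ | ⟨h1, _⟩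
    · exact lt_of_lt_of_le hτ₀pos h1
    · exact lt_of_lt_of_le hτ₁pos h1
  -- KKT-style key inequality
  have key : ∀ v : Fin m → ℝ, (∀ j, a j ≤ v j ∧ v j ≤ b j) → ∀ j,
      (w j / clip τs j) * (v j - clip τs j) ≤ τs * (v j - clip τs j) := by
    intro v hv j
    rcases le_or_gt (w j / τs) (b j) with hxb | hxb
    · rcases le_or_gt (a j) (w j / τs) with hax | hax
      · have hc : clip τs j = w j / τs := by
          show min (max (w j / τs) (a j)) (b j) = w j / τs
          rw [max_eq_left hax, min_eq_left hxb]
        have hc2 : w j / clip τs j = τs := by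
          rw [hc]
          field_simp
          exact div_self (hw0 j).ne'
        rw [hc2]
      · have hc : clip τs j = a j := by
          show min (max (w j / τs) (a j)) (b j) = a j
          rw [max_eq_right hax.le, min_eq_left (hab j)]
        rw [hc]
        have h1 : w j / a j ≤ τs := by
          rw [div_le_iff₀ (ha0 j)]
          have := (div_lt_iff₀ hτspos).1 hax
          linarith [mul_comm (a j) τs]
        have h2 : 0 ≤ v j - a j := sub_nonneg.2 (hv j).1
        exact mul_le_mul_of_nonneg_right h1 h2
    · have hc : clip τs j = b j :=
        min_eq_right (le_trans hxb.le (le_max_left _ _))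
      rw [hc]
      have h1 : τs ≤ w j / b j := by
        rw [le_div_iff₀ (hb0 j)]
        have := (lt_div_iff₀ hτspos).1 hxb
        linarith [mul_comm (b j) τs]
      have h2 : v j - b j ≤ 0 := sub_nonpos.2 (hv j).2
      exact mul_le_mul_of_nonpos_right h1 h2
  -- per-coordinate log inequality
  have per : ∀ v : Fin m → ℝ, (∀ j, a j ≤ v j ∧ v j ≤ b j) → ∀ j,
      w j * Real.log (w j / clip τs j) - w j * Real.log (w j / v j)
        = w j * Real.log (v j / clip τs j) ∧
      w j * Real.log (v j / clip τs j) ≤ (w j / clip τs j) * (v j - clip τs j) := by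
    intro v hv j
    have hvj : 0 < v j := lt_of_lt_of_le (ha0 j) (hv j).1
    have hcj := hclip_pos τs j
    constructor
    · rw [Real.log_div (hw0 j).ne' hcj.ne', Real.log_div (hw0 j).ne' hvj.ne',
        Real.log_div hvj.ne' hcj.ne']
      ring
    · have h1 : Real.log (v j / clip τs j) ≤ v j / clip τs j - 1 :=
        Real.log_le_sub_one_of_pos (div_pos hvj hcj)
      have h2 : w j * (v j / clip τs j - 1) = (w j / clip τs j) * (v j - clip τs j) := by
        field_simp
      calc w j * Real.log (v j / clip τs j)
          ≤ w j * (v j / clip τs j - 1) := mul_le_mul_of_nonneg_left h1 (hw0 j).le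
        _ = _ := h2
  -- sum of key inequalities is ≤ 0
  have sumkey : ∀ v : Fin m → ℝ, (∀ j, a j ≤ v j ∧ v j ≤ b j) → ∑ j, v j = 1 →
      (∑ j, (w j / clip τs j) * (v j - clip τs j)) ≤ 0 := by
    intro v hv hv1
    calc (∑ j, (w j / clip τs j) * (v j - clip τs j))
        ≤ ∑ j, τs * (v j - clip τs j) := Finset.sum_le_sum fun j _ => key v hv j
      _ = τs * ((∑ j, v j) - ∑ j, clip τs j) := by
          rw [← Finset.mul_sum, Finset.sum_sub_distrib]
      _ = 0 := by rw [hv1, hτseq']; ring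
  -- optimality
  have fopt : ∀ v : Fin m → ℝ, (∀ j, a j ≤ v j ∧ v j ≤ b j) → ∑ j, v j = 1 →
      ∑ j, w j * Real.log (w j / clip τs j) ≤ ∑ j, w j * Real.log (w j / v j) := by
    intro v hv hv1
    rw [← sub_nonpos, ← Finset.sum_sub_distrib]
    calc (∑ j, (w j * Real.log (w j / clip τs j) - w j * Real.log (w j / v j)))
        = ∑ j, w j * Real.log (v j / clip τs j) :=
          Finset.sum_congr rfl fun j _ => (per v hv j).1
      _ ≤ ∑ j, (w j / clip τs j) * (v j - clip τs j) :=
          Finset.sum_le_sum fun j _ => (per v hv j).2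
      _ ≤ 0 := sumkey v hv hv1
  refine ⟨clip τs, ⟨fun j => ⟨hclip_lb τs j, hclip_ub τs j⟩, hτseq'⟩, fopt, ?_, ?_⟩
  · -- uniqueness
    intro v hv hv1 hmin
    have h1 : ∑ j, w j * Real.log (w j / v j) ≤ ∑ j, w j * Real.log (w j / clip τs j) :=
      hmin (clip τs) (fun j => ⟨hclip_lb τs j, hclip_ub τs j⟩) hτseq'
    have heq : (∑ j, w j * Real.log (w j / clip τs j))
        = ∑ j, w j * Real.log (w j / v j) := le_antisymm (fopt v hv hv1) h1
    have hlogsum : (∑ j, w j * Real.log (v j / clip τs j)) = 0 := by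
      have := Finset.sum_congr rfl fun j (_ : j ∈ univ) => (per v hv j).1
      rw [← this, Finset.sum_sub_distrib, heq, sub_self]
    set e : Fin m → ℝ :=
      fun j => (w j / clip τs j) * (v j - clip τs j) - w j * Real.log (v j / clip τs j)
      with he
    have hennneg : ∀ j ∈ univ, 0 ≤ e j := fun j _ => sub_nonneg.2 (per v hv j).2
    have hesum : (∑ j, e j) ≤ 0 := by
      rw [he]
      simp only [Finset.sum_sub_distrib, hlogsum, sub_zero]
      exact sumkey v hv hv1
    have hesum0 : (∑ j, e j) = 0 :=
      le_antisymm hesum (Finset.sum_nonneg hennneg)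
    have hzero := (Finset.sum_eq_zero_iff_of_nonneg hennneg).1 hesum0
    funext j
    have hvj : 0 < v j := lt_of_lt_of_le (ha0 j) (hv j).1
    have hcj := hclip_pos τs j
    have hej : e j = 0 := hzero j (mem_univ j)
    have hform : (w j / clip τs j) * (v j - clip τs j)
        = w j * (v j / clip τs j - 1) := by field_simp
    have hkey : Real.log (v j / clip τs j) = v j / clip τs j - 1 := by
      have : w j * (v j / clip τs j - 1) - w j * Real.log (v j / clip τs j) = 0 := by
        rw [← hform]; exact hej
      have hw := (hw0 j).ne'
      have : w j * ((v j / clip τs j - 1) - Real.log (v j / clip τs j)) = 0 := by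
        linarith [this]
      rcases mul_eq_zero.1 this with h | h
      · exact absurd h hw
      · linarith
    by_contra hne
    have hx1 : v j / clip τs j ≠ 1 := by
      intro h
      exact hne (by field_simp at h; linarith)
    have := Real.log_lt_sub_one_of_pos (div_pos hvj hcj) hx1
    rw [hkey] at this
    exact lt_irrefl _ this
  · -- closed form for any root
    intro τ hτ hτ1 j
    exact hclip_eq τs τ hτspos hτ hτseq' hτ1 j
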